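/- For complete homogeneous symmetric polynomials in K variables out of a window of a sequence: if x_1 = x_{2K-1} (the first variable of the first window equals the last variable of the last window), then the K×K matrix A with A_{mn} = h_{m-1}(x_n, ..., x_{n+K-1}) has determinant zero. -/

import Mathlib

noncomputable def hpoly {R : Type*} [CommRing R] {K : ℕ} (y : Fin K → R) (d : ℕ) : R :=
  ∑ s : Sym (Fin K) d, ((s : Multiset (Fin K)).map y).prod

section aux
variable {R : Type*} [CommRing R]

lemma hpoly_zero {K : ℕ} (y : Fin K → R) : hpoly y 0 = 1 := by
  simp [hpoly, Sym.eq_nil_of_card_zero]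

lemma hpoly_one {K : ℕ} (y : Fin K → R) : hpoly y 1 = ∑ i, y i := by
  symm
  apply Fintype.sum_equiv Sym.oneEquiv
  simp [Sym.oneEquiv_apply]

lemma hpoly_split {K : ℕ} (y : Fin (K + 1) → R) (i : Fin (K + 1)) (e : Fin K → Fin (K + 1))
    (g : Fin (K + 1) → Fin K) (he : Function.Injective e) (hei : ∀ j, e j ≠ i)
    (hge : ∀ a, a ≠ i → e (g a) = a) (d : ℕ) :
    hpoly y (d + 1) = hpoly (y ∘ e) (d + 1) + y i * hpoly y d := by
  classical
  have S_in : ∑ s ∈ Finset.univ.filter (fun s : Sym (Fin (K + 1)) (d + 1) => i ∈ s),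
      ((s : Multiset (Fin (K + 1))).map y).prod = y i * hpoly y d := by
    rw [hpoly, Finset.mul_sum]
    symm
    apply Finset.sum_bij (fun (t : Sym (Fin (K + 1)) d) _ => i ::ₛ t)
    · intro t _
      simp [Sym.mem_cons_self]
    · intro a _ b _ h
      exact (Sym.cons_inj_right i a b).mp h
    · intro s hs
      simp only [Finset.mem_filter] at hs
      exact ⟨s.erase i hs.2, Finset.mem_univ _, Sym.cons_erase hs.2⟩
    · intro t _
      simp [Sym.coe_cons]
  have S_out : ∑ s ∈ Finset.univ.filter (fun s : Sym (Fin (K + 1)) (d + 1) => ¬ i ∈ s),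
      ((s : Multiset (Fin (K + 1))).map y).prod = hpoly (y ∘ e) (d + 1) := by
    rw [hpoly]
    symm
    apply Finset.sum_bij (fun (t : Sym (Fin K) (d + 1)) _ => t.map e)
    · intro t _
      simp only [Finset.mem_filter, Finset.mem_univ, true_and, Sym.mem_map]
      rintro ⟨j, _, hj⟩
      exact hei j hj
    · intro a _ b _ h
      exact Sym.map_injective he _ h
    · intro s hs
      simp only [Finset.mem_filter, Finset.mem_univ, true_and] at hs
      refine ⟨s.map g, Finset.mem_univ _, ?_⟩
      apply Sym.coe_injective
      rw [Sym.coe_map, Sym.coe_map, Multiset.map_map]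
      rw [Multiset.map_congr rfl (fun a ha => ?_), Multiset.map_id]
      · exact hge a (fun h => hs (h ▸ ha))
    · intro t _
      simp [Sym.coe_map, Multiset.map_map]
  have := Finset.sum_filter_add_sum_filter_not Finset.univ
    (fun s : Sym (Fin (K + 1)) (d + 1) => i ∈ s)
    (fun s => ((s : Multiset (Fin (K + 1))).map y).prod)
  rw [S_in, S_out] at this
  rw [hpoly, ← this]
  ring

lemma hpoly_sub {K : ℕ} (hK : 1 ≤ K) (y : Fin (K + 1) → R) (d : ℕ) :
    hpoly (y ∘ Fin.castSucc) (d + 1) - hpoly (y ∘ Fin.succ) (d + 1)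
      = (y 0 - y (Fin.last K)) * hpoly y d := by
  have h1 := hpoly_split y (Fin.last K) Fin.castSucc
    (fun a => if h : (a : ℕ) < K then ⟨a, h⟩ else ⟨0, hK⟩)
    (Fin.castSucc_injective K)
    (fun j => (Fin.castSucc_lt_last j).ne)
    (fun a ha => by
      have hv : (a : ℕ) < K := Fin.val_lt_last ha
      simp only [dif_pos hv]
      ext
      simp)
    d
  have h2 := hpoly_split y 0 Fin.succ
    (fun a => ⟨(a : ℕ) - 1, by omega⟩)
    (Fin.succ_injective K)
    (fun j => Fin.succ_ne_zero j)
    (fun a ha => by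
      have hv : (a : ℕ) ≠ 0 := fun h => ha (Fin.ext h)
      ext
      simp [Fin.val_succ]
      omega)
    d
  linear_combination h2 - h1

/-- The window matrix. -/
noncomputable def Mwin (W S : ℕ) (x : ℕ → R) : Matrix (Fin S) (Fin S) R :=
  Matrix.of fun m n => hpoly (fun r : Fin W => x ((n : ℕ) + 1 + (r : ℕ))) (m : ℕ)

lemma det_Mwin_zero : ∀ S W : ℕ, 1 ≤ W → ∀ x : ℕ → R, x (S + W + 1) = x 1 →
    (Mwin W (S + 2) x).det = 0 := by
  intro S
  induction S with
  | zero =>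
    intro W hW x hx
    rw [Matrix.det_fin_two]
    simp only [Mwin, Matrix.of_apply, Fin.val_zero, Fin.val_one, hpoly_zero, hpoly_one,
      one_mul, mul_one]
    rw [Fin.sum_univ_eq_sum_range (fun r => x (1 + 1 + r)),
      Fin.sum_univ_eq_sum_range (fun r => x (0 + 1 + r))]
    have e1 : ∑ r ∈ Finset.range (W + 1), x (1 + r)
        = ∑ r ∈ Finset.range W, x (1 + 1 + r) + x 1 := by
      rw [Finset.sum_range_succ']
      congr 1
      exact Finset.sum_congr rfl fun r _ => by ring_nf
    have e2 : ∑ r ∈ Finset.range (W + 1), x (1 + r)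
        = ∑ r ∈ Finset.range W, x (0 + 1 + r) + x (1 + W) := by
      rw [Finset.sum_range_succ]
    have hx' : x (1 + W) = x 1 := by
      rw [show 1 + W = 0 + W + 1 by omega]; exact hx
    rw [hx'] at e2
    linear_combination e2 - e1
  | succ S ih =>
    intro W hW x hx
    set A := Mwin W (S + 1 + 2) x with hA
    set B : Matrix (Fin (S + 3)) (Fin (S + 3)) R :=
      Matrix.of fun m (n : Fin (S + 3)) =>
        n.cases (A m 0) (fun j => A m j.succ - A m j.castSucc) with hB
    have hdet : A.det = B.det := by
      apply Matrix.det_eq_of_forall_col_eq_smul_add_pred (fun _ => 1)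
      · intro i; simp [hB]
      · intro i j
        simp only [hB, Matrix.of_apply, Fin.cases_succ]
        ring
    have hArow0 : ∀ n : Fin (S + 3), A 0 n = 1 := by
      intro n
      simp [hA, Mwin, hpoly_zero]
    have hBrow0 : ∀ j : Fin (S + 2), B 0 j.succ = 0 := by
      intro j
      simp only [hB, Matrix.of_apply, Fin.cases_succ, hArow0, sub_self]
    rw [hdet, Matrix.det_succ_row_zero, Fin.sum_univ_succ]
    have hzero : ∑ j : Fin (S + 2), (-1 : R) ^ ((j.succ : Fin (S+3)) : ℕ) * B 0 j.succ *
        (B.submatrix Fin.succ j.succ.succAbove).det = 0 := by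
      apply Finset.sum_eq_zero
      intro j _
      rw [hBrow0]
      ring
    rw [hzero, add_zero]
    have hB00 : B 0 0 = 1 := by
      simp only [hB, Matrix.of_apply]
      rw [show ((0 : Fin (S + 3)).cases (A 0 0) fun j => A 0 j.succ - A 0 j.castSucc) = A 0 0
        from rfl]
      exact hArow0 0
    have hsub : B.submatrix Fin.succ ((0 : Fin (S + 3)).succAbove)
        = Mwin (W + 1) (S + 2) x * Matrix.diagonal
            (fun n : Fin (S + 2) => x ((n : ℕ) + 1 + W) - x ((n : ℕ) + 1)) := by
      ext m n
      rw [Matrix.mul_diagonal]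
      have hcol : (0 : Fin (S + 3)).succAbove n = n.succ := by
        simp [Fin.zero_succAbove]
      rw [Matrix.submatrix_apply, hcol]
      simp only [hB, Matrix.of_apply, Fin.cases_succ]
      set y : Fin (W + 1) → R := fun r => x ((n : ℕ) + 1 + (r : ℕ)) with hy
      have hc : A m.succ n.castSucc = hpoly (y ∘ Fin.castSucc) ((m : ℕ) + 1) := by
        simp only [hA, Mwin, Matrix.of_apply, hy, Fin.val_succ, Fin.coe_castSucc]
        rfl
      have hs : A m.succ n.succ = hpoly (y ∘ Fin.succ) ((m : ℕ) + 1) := by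
        simp only [hA, Mwin, Matrix.of_apply, hy, Fin.val_succ]
        congr 1
        funext r
        simp only [Function.comp_apply, Fin.val_succ]
        congr 1
        omega
      rw [hs, hc, show hpoly (y ∘ Fin.succ) ((m : ℕ) + 1) - hpoly (y ∘ Fin.castSucc) ((m : ℕ) + 1)
          = -(hpoly (y ∘ Fin.castSucc) ((m : ℕ) + 1) - hpoly (y ∘ Fin.succ) ((m : ℕ) + 1)) by ring,
        hpoly_sub hW y (m : ℕ)]
      have h0 : y 0 = x ((n : ℕ) + 1) := by simp [hy]
      have hl : y (Fin.last W) = x ((n : ℕ) + 1 + W) := by simp [hy]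
      rw [h0, hl]
      simp only [Mwin, Matrix.of_apply, hy]
      ring
    rw [hsub, Matrix.det_mul, ih (W + 1) (by omega) x (by
      rw [show S + (W + 1) + 1 = S + 1 + W + 1 by omega]; exact hx)]
    simp
end aux

theorem det_hpoly_window_eq_zero {R : Type*} [CommRing R] (K : ℕ) (hK : 2 ≤ K)
    (x : ℕ → R) (hx : x (2 * K - 1) = x 1) :
    Matrix.det (Matrix.of fun m n : Fin K =>
        hpoly (fun r : Fin K => x ((n : ℕ) + 1 + (r : ℕ))) (m : ℕ)) = 0 := by
  obtain ⟨S, rfl⟩ : ∃ S, K = S + 2 := ⟨K - 2, by omega⟩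
  have := det_Mwin_zero S (S + 2) (by omega) x (by
    rw [show S + (S + 2) + 1 = 2 * (S + 2) - 1 by omega]; exact hx)
  exact this
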